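/- arXiv:2005.12983 — 12 statements merged into one kernel-verified Lean document; each statement's English description precedes it below -/
import Mathlib

section
/- A proper ideal I of a commutative ring R is an n-almost 1-absorbing prime ideal for every n ≥ 2 if and only if I is a w-1-absorbing prime ideal (i.e., φ-1-absorbing prime with φ(I) = ⋂_{n≥1} I^n). -/
/-- `I` is a `φ`-1-absorbing prime ideal (with `φ(I)` given as the set `S`,
which may be `∅`): for all nonunits `x, y, z` with `x*y*z ∈ I \ S`,
either `x*y ∈ I` or `z ∈ I`. -/
def Phi1AbsPrime {R : Type*} [CommRing R] (I : Ideal R) (S : Set R) : Prop :=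
  ∀ x y z : R, ¬ IsUnit x → ¬ IsUnit y → ¬ IsUnit z →
    x * y * z ∈ I → x * y * z ∉ S → x * y ∈ I ∨ z ∈ I

theorem stmt_2 {R : Type*} [CommRing R] (I : Ideal R) (hI : I ≠ ⊤) :
    (∀ n : ℕ, 2 ≤ n → Phi1AbsPrime I ((I ^ n : Ideal R) : Set R)) ↔
      Phi1AbsPrime I {r : R | ∀ n : ℕ, 1 ≤ n → r ∈ I ^ n} := by
  constructor
  · intro h x y z hx hy hz hmem hnot
    simp only [Set.mem_setOf_eq] at hnot
    push_neg at hnot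
    obtain ⟨n, hn1, hnmem⟩ := hnot
    have hn2 : 2 ≤ n := by
      rcases Nat.lt_or_ge n 2 with h' | h'
      · interval_cases n
        · exact absurd (by simpa using hmem) hnmem
      · exact h'
    exact h n hn2 x y z hx hy hz hmem hnmem
  · intro h n hn x y z hx hy hz hmem hnot
    refine h x y z hx hy hz hmem ?_
    intro hall
    exact hnot (hall n (by omega))
end

section
/- In Z_{pq²} with p, q distinct primes, the zero ideal is a weakly 1-absorbing prime ideal but not a 1-absorbing prime ideal. -/
theorem stmt_3 (p q : ℕ) (hp : p.Prime) (hq : q.Prime) (hpq : p ≠ q) :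
    Phi1AbsPrime (⊥ : Ideal (ZMod (p * q ^ 2))) {0} ∧
    ¬ Phi1AbsPrime (⊥ : Ideal (ZMod (p * q ^ 2))) (∅ : Set (ZMod (p * q ^ 2))) := by
  have hn : p * q ^ 2 ≠ 0 := Nat.mul_ne_zero hp.pos.ne' (pow_ne_zero 2 hq.pos.ne')
  haveI : NeZero (p * q ^ 2) := ⟨hn⟩
  constructor
  · intro x y z _ _ _ hmem hnot
    exact absurd (Set.mem_singleton_iff.mpr (by simpa using hmem)) hnot
  · intro h
    have hdvd : ∀ m : ℕ, m ∣ p * q ^ 2 → m ≠ 1 → ¬ IsUnit ((m : ZMod (p * q ^ 2))) := by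
      intro m hmd hm1 hu
      rw [ZMod.isUnit_iff_coprime] at hu
      exact hm1 (Nat.Coprime.eq_one_of_dvd hu hmd)
    have hx : ¬ IsUnit ((p : ZMod (p * q ^ 2))) := hdvd p ⟨q ^ 2, rfl⟩ hp.one_lt.ne'
    have hy : ¬ IsUnit ((q : ZMod (p * q ^ 2))) :=
      hdvd q ⟨p * q, by ring⟩ hq.one_lt.ne'
    have hzero : (p : ZMod (p * q ^ 2)) * q * q = 0 := by
      have : ((p * q ^ 2 : ℕ) : ZMod (p * q ^ 2)) = 0 := ZMod.natCast_self _
      push_cast at this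
      rw [← this]; ring
    rcases h p q q hx hy hy (by simpa using hzero) (Set.notMem_empty _) with h1 | h2
    · rw [Ideal.mem_bot] at h1
      have : ((p * q : ℕ) : ZMod (p * q ^ 2)) = 0 := by push_cast; exact h1
      rw [ZMod.natCast_eq_zero_iff] at this
      have : q ^ 2 ∣ q := (Nat.mul_dvd_mul_iff_left hp.pos).mp this
      have := Nat.le_of_dvd hq.pos this
      nlinarith [hq.two_le]
    · rw [Ideal.mem_bot, ZMod.natCast_eq_zero_iff] at h2
      have := Nat.le_of_dvd hq.pos h2
      nlinarith [hq.two_le, hp.two_le]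
end

section
/- In R = Z/(pq²) with p, q distinct primes, the ideal I = (q²) is a weakly 1-absorbing prime ideal (i.e., φ-1-absorbing prime with φ(I) = 0) but not a weakly prime ideal (φ-prime with φ(I) = 0), since q·q ∈ I − {0} and q ∉ I. -/
/-- Divisibility by a divisor of the modulus transfers to the value. -/
lemma zmod_dvd_iff {n m : ℕ} [NeZero n] (hm : m ∣ n) (x : ZMod n) :
    (m : ZMod n) ∣ x ↔ m ∣ x.val := by
  constructor
  · rintro ⟨y, rfl⟩
    have h1 : ((m * y.val : ℕ) : ZMod n) = (m : ZMod n) * y := by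
      push_cast [ZMod.natCast_val, ZMod.cast_id]
      ring
    have h2 : ((m : ZMod n) * y).val ≡ m * y.val [MOD n] := by
      rw [← ZMod.natCast_eq_natCast_iff, h1, ZMod.natCast_val, ZMod.cast_id]
    have h3 : ((m : ZMod n) * y).val ≡ m * y.val [MOD m] := h2.of_dvd hm
    have : m ∣ m * y.val := Dvd.intro _ rfl
    exact (Nat.modEq_zero_iff_dvd.mp (h3.trans (Nat.modEq_zero_iff_dvd.mpr this)))
  · rintro ⟨k, hk⟩
    refine ⟨(k : ZMod n), ?_⟩
    have : ((x.val : ℕ) : ZMod n) = x := ZMod.natCast_rightInverse x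
    rw [← this, hk]
    push_cast
    ring

theorem stmt_6 (p q : ℕ) (hp : p.Prime) (hq : q.Prime) (hpq : p ≠ q) :
    let R := ZMod (p * q ^ 2)
    let I : Ideal R := Ideal.span {(q : R) ^ 2}
    Phi1AbsPrime I {0} ∧
      ¬ (∀ x y : R, x * y ≠ 0 → x * y ∈ I → x ∈ I ∨ y ∈ I) ∧
      (q : R) * (q : R) ∈ I ∧ (q : R) * (q : R) ≠ 0 ∧ (q : R) ∉ I := by
  intro R I
  have hp2 := hp.two_le
  have hq2 := hq.two_le
  have hN : p * q ^ 2 ≠ 0 := by positivity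
  haveI : NeZero (p * q ^ 2) := ⟨hN⟩
  have hdvdN : q ^ 2 ∣ p * q ^ 2 := dvd_mul_left _ _
  have hcop : Nat.Coprime p (q ^ 2) :=
    ((Nat.coprime_primes hp hq).mpr hpq).pow_right _
  -- membership criterion
  have hmem : ∀ x : R, x ∈ I ↔ q ^ 2 ∣ x.val := by
    intro x
    rw [Ideal.mem_span_singleton]
    have : (q : R) ^ 2 = ((q ^ 2 : ℕ) : R) := by push_cast; ring
    rw [this, zmod_dvd_iff hdvdN]
  -- nonunits
  have hnonunit : ∀ x : R, ¬ IsUnit x → p ∣ x.val ∨ q ∣ x.val := by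
    intro x hx
    have hxv : ((x.val : ℕ) : R) = x := ZMod.natCast_rightInverse x
    rw [← hxv, ZMod.isUnit_iff_coprime] at hx
    by_contra hcon
    push_neg at hcon
    exact hx (Nat.Coprime.mul_right
      ((hp.coprime_iff_not_dvd.mpr hcon.1).symm)
      (((hq.coprime_iff_not_dvd.mpr hcon.2).symm).pow_right _))
  -- q*q ∈ I, ≠ 0, q ∉ I
  have hqq : (q : R) * (q : R) ∈ I := by
    rw [hmem]
    have : ((q ^ 2 : ℕ) : R) = (q : R) * (q : R) := by push_cast; ring
    rw [← this, ZMod.val_natCast_of_lt]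
    nlinarith
  have hqqne : (q : R) * (q : R) ≠ 0 := by
    intro h
    have : ((q ^ 2 : ℕ) : R) = 0 := by rw [Nat.cast_pow, pow_two]; exact h
    rw [ZMod.natCast_eq_zero_iff] at this
    have := Nat.le_of_dvd (by positivity) this
    nlinarith
  have hqnotI : (q : R) ∉ I := by
    rw [hmem]
    rw [ZMod.val_natCast_of_lt (by nlinarith)]
    intro h
    have := Nat.le_of_dvd (by omega) h
    nlinarith
  refine ⟨?_, ?_, hqq, hqqne, hqnotI⟩
  · intro x y z hx hy hz hmemI hne
    simp only [Set.mem_singleton_iff] at hne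
    set a := x.val with ha
    set b := y.val with hb
    set c := z.val with hc
    have hxv : ((a : ℕ) : R) = x := ZMod.natCast_rightInverse x
    have hyv : ((b : ℕ) : R) = y := ZMod.natCast_rightInverse y
    have hzv : ((c : ℕ) : R) = z := ZMod.natCast_rightInverse z
    have habc : ((a * b * c : ℕ) : R) = x * y * z := by rw [Nat.cast_mul, Nat.cast_mul, hxv, hyv, hzv]
    -- q^2 ∣ a*b*c
    have h1 : q ^ 2 ∣ a * b * c := by
      rw [hmem] at hmemI
      have hmodN : a * b * c ≡ (x * y * z).val [MOD p * q ^ 2] := by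
        rw [← ZMod.natCast_eq_natCast_iff, habc, ZMod.natCast_val, ZMod.cast_id]
      have hmodq : a * b * c ≡ (x * y * z).val [MOD q ^ 2] := hmodN.of_dvd hdvdN
      exact Nat.modEq_zero_iff_dvd.mp
        (hmodq.trans (Nat.modEq_zero_iff_dvd.mpr hmemI))
    -- ¬ N ∣ a*b*c
    have h2 : ¬ p * q ^ 2 ∣ a * b * c := by
      intro h
      exact hne (by rw [← habc, ZMod.natCast_eq_zero_iff]; exact h)
    -- p does not divide a*b*c
    have hpabc : ¬ p ∣ a * b * c := fun h => h2 (hcop.mul_dvd_of_dvd_of_dvd h h1)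
    have hqa : q ∣ a := by
      rcases hnonunit x hx with h | h
      · exact absurd (dvd_mul_of_dvd_left (dvd_mul_of_dvd_left h b) c) hpabc
      · exact h
    have hqb : q ∣ b := by
      rcases hnonunit y hy with h | h
      · exact absurd (dvd_mul_of_dvd_left (dvd_mul_of_dvd_right h a) c) hpabc
      · exact h
    left
    rw [hmem]
    have hab : q ^ 2 ∣ a * b := by
      rw [pow_two]; exact mul_dvd_mul hqa hqb
    have hxy : ((a * b : ℕ) : R) = x * y := by rw [Nat.cast_mul, hxv, hyv]
    have hmodN : a * b ≡ (x * y).val [MOD p * q ^ 2] := by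
      rw [← ZMod.natCast_eq_natCast_iff, hxy, ZMod.natCast_val, ZMod.cast_id]
    have hmodq : a * b ≡ (x * y).val [MOD q ^ 2] := hmodN.of_dvd hdvdN
    exact Nat.modEq_zero_iff_dvd.mp
      ((hmodq.symm).trans (Nat.modEq_zero_iff_dvd.mpr hab))
  · intro h
    rcases h (q : R) (q : R) hqqne hqq with h | h <;> exact hqnotI h
end

section
/- Let I be a proper ideal of a commutative ring R and φ a function on ideals with φ(I) ⊆ I. Then I is φ-1-absorbing prime if and only if for all nonunits x, y ∈ R with xy ∉ I, the colon ideal (I : xy) equals I ∪ (φ(I) : xy). -/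
theorem stmt_7 {R : Type*} [CommRing R] (I : Ideal R) (hI : I ≠ ⊤)
    (φI : Ideal R) (hφ : φI ≤ I) :
    Phi1AbsPrime I (φI : Set R) ↔
      ∀ x y : R, ¬ IsUnit x → ¬ IsUnit y → x * y ∉ I →
        {r : R | r * (x * y) ∈ I} = (I : Set R) ∪ {r : R | r * (x * y) ∈ φI} := by
  constructor
  · intro h x y hx hy hxy
    ext r
    simp only [Set.mem_setOf_eq, Set.mem_union, SetLike.mem_coe]
    constructor
    · intro hr
      by_cases hrφ : r * (x * y) ∈ φI
      · exact Or.inr hrφ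
      · have hru : ¬ IsUnit r := by
          intro hu
          obtain ⟨u, rfl⟩ := hu
          have := I.mul_mem_left (↑u⁻¹) hr
          rw [← mul_assoc] at this
          simp at this
          exact hxy this
        have h1 : x * y * r ∈ I := by rwa [mul_comm] at hr
        have h2 : x * y * r ∉ (φI : Set R) := by
          rw [mul_comm]; exact hrφ
        rcases h x y r hx hy hru h1 h2 with h' | h'
        · exact absurd h' hxy
        · exact Or.inl h'
    · rintro (hr | hr)
      · exact I.mul_mem_right _ hr
      · exact hφ hr
  · intro h x y z hx hy hz hmem hnφ
    by_cases hxy : x * y ∈ I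
    · exact Or.inl hxy
    · right
      have := h x y hx hy hxy
      have hzmem : z ∈ {r : R | r * (x * y) ∈ I} := by
        simp only [Set.mem_setOf_eq]
        rwa [mul_comm]
      rw [this] at hzmem
      rcases hzmem with h' | h'
      · exact h'
      · exfalso
        apply hnφ
        simp only [Set.mem_setOf_eq] at h'
        rwa [mul_comm] at h'
end

section
/- Let I be a proper ideal of a commutative ring R. Then I is φ-1-absorbing prime if and only if for all nonunits x, y ∈ R with xy ∉ I, either (I : xy) = I or (I : xy) = (φ(I) : xy). -/
theorem stmt_8 {R : Type*} [CommRing R] (I : Ideal R) (hI : I ≠ ⊤)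
    (φI : Ideal R) (hφ : φI ≤ I) :
    Phi1AbsPrime I (φI : Set R) ↔
      ∀ x y : R, ¬ IsUnit x → ¬ IsUnit y → x * y ∉ I →
        {r : R | r * (x * y) ∈ I} = (I : Set R) ∨
          {r : R | r * (x * y) ∈ I} = {r : R | r * (x * y) ∈ φI} := by
  constructor
  · intro h x y hx hy hxy
    have key : ∀ r : R, r * (x * y) ∈ I → r ∈ I ∨ r * (x * y) ∈ φI := by
      intro r hr
      by_cases hru : IsUnit r
      · obtain ⟨u, rfl⟩ := hru
        exfalso
        apply hxy
        have h2 := I.mul_mem_left (↑u⁻¹) hr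
        rwa [← mul_assoc, Units.inv_mul, one_mul] at h2
      · by_cases hφr : x * y * r ∈ φI
        · right; rwa [mul_comm]
        · rcases h x y r hx hy hru (by rwa [mul_comm] at hr)
            (by simpa using hφr) with h1 | h1
          · exact absurd h1 hxy
          · exact Or.inl h1
    by_cases hA : ∀ r : R, r * (x * y) ∈ I → r ∈ I
    · left
      ext r
      simp only [Set.mem_setOf_eq, SetLike.mem_coe]
      exact ⟨hA r, fun hr => I.mul_mem_right _ hr⟩
    · right
      push_neg at hA
      obtain ⟨a, ha, haI⟩ := hA
      have haφ : a * (x * y) ∈ φI := (key a ha).resolve_left haI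
      ext r
      simp only [Set.mem_setOf_eq]
      constructor
      · intro hr
        rcases key r hr with hrI | hrφ
        · have hsum : (a + r) * (x * y) ∈ I := by
            rw [add_mul]; exact I.add_mem ha hr
          rcases key _ hsum with hs | hs
          · exact absurd (by simpa using I.sub_mem hs hrI) haI
          · have h3 := φI.sub_mem hs haφ
            rwa [add_mul, add_sub_cancel_left] at h3
        · exact hrφ
      · intro hr
        exact hφ hr
  · intro h x y z hx hy hz hmem hnmem
    by_cases hxy : x * y ∈ I
    · exact Or.inl hxy
    · rcases h x y hx hy hxy with hA | hA
      · have hz' : z ∈ {r : R | r * (x * y) ∈ I} := by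
          simpa [mul_comm] using hmem
        rw [hA] at hz'
        exact Or.inr hz'
      · have hz' : z ∈ {r : R | r * (x * y) ∈ I} := by
          simpa [mul_comm] using hmem
        rw [hA] at hz'
        exact absurd (show x * y * z ∈ (φI : Set R) by
          simpa [mul_comm] using hz') hnmem
end

section
/- Let I be a proper ideal of a commutative ring R. Then I is φ-1-absorbing prime if and only if for all nonunits x, y ∈ R and every proper ideal J of R with xyJ ⊆ I and xyJ ⊄ φ(I), either xy ∈ I or J ⊆ I. -/
theorem stmt_9 {R : Type*} [CommRing R] (I : Ideal R) (hI : I ≠ ⊤)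
    (φI : Ideal R) (hφ : φI ≤ I) :
    Phi1AbsPrime I (φI : Set R) ↔
      ∀ x y : R, ¬ IsUnit x → ¬ IsUnit y → ∀ J : Ideal R, J ≠ ⊤ →
        (∀ a ∈ J, x * y * a ∈ I) → ¬ (∀ a ∈ J, x * y * a ∈ φI) →
          x * y ∈ I ∨ J ≤ I := by
  constructor
  · intro h x y hx hy J hJ hJI hJφ
    push_neg at hJφ
    obtain ⟨a, haJ, haφ⟩ := hJφ
    have ha : ¬ IsUnit a := fun hu => hJ (J.eq_top_of_isUnit_mem haJ hu)
    by_cases hxy : x * y ∈ I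
    · exact Or.inl hxy
    right
    have haI : a ∈ I := (h x y a hx hy ha (hJI a haJ) haφ).resolve_left hxy
    intro b hbJ
    by_cases hbφ : x * y * b ∈ φI
    · have habφ : x * y * (a + b) ∉ φI := by
        intro hm
        rw [mul_add] at hm
        exact haφ (by simpa using φI.sub_mem hm hbφ)
      have hab : ¬ IsUnit (a + b) := fun hu =>
        hJ (J.eq_top_of_isUnit_mem (J.add_mem haJ hbJ) hu)
      have := (h x y (a + b) hx hy hab (hJI _ (J.add_mem haJ hbJ)) habφ).resolve_left hxy
      simpa using I.sub_mem this haI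
    · exact (h x y b hx hy (fun hu => hJ (J.eq_top_of_isUnit_mem hbJ hu))
        (hJI b hbJ) hbφ).resolve_left hxy
  · intro h x y z hx hy hz hmem hφm
    have hJ : Ideal.span {z} ≠ ⊤ := by
      rw [Ne, Ideal.span_singleton_eq_top]
      exact hz
    have h1 : ∀ a ∈ Ideal.span {z}, x * y * a ∈ I := by
      intro a ha
      obtain ⟨r, rfl⟩ := Ideal.mem_span_singleton'.mp ha
      have : x * y * (r * z) = r * (x * y * z) := by ring
      rw [this]
      exact I.mul_mem_left r hmem
    have h2 : ¬ (∀ a ∈ Ideal.span {z}, x * y * a ∈ φI) := fun hc =>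
      hφm (hc z (Ideal.mem_span_singleton_self z))
    rcases h x y hx hy _ hJ h1 h2 with h | h
    · exact Or.inl h
    · exact Or.inr (h (Ideal.mem_span_singleton_self z))
end

section
/- Let I be a proper ideal of a commutative ring R. Then I is φ-1-absorbing prime if and only if for all proper ideals J, K, L of R with JKL ⊆ I and JKL ⊄ φ(I), either JK ⊆ I or L ⊆ I. -/
theorem stmt_10 {R : Type*} [CommRing R] (I : Ideal R) (hI : I ≠ ⊤)
    (φI : Ideal R) (hφ : φI ≤ I) :
    Phi1AbsPrime I (φI : Set R) ↔
      ∀ J K L : Ideal R, J ≠ ⊤ → K ≠ ⊤ → L ≠ ⊤ →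
        J * K * L ≤ I → ¬ (J * K * L ≤ φI) → J * K ≤ I ∨ L ≤ I := by
  constructor
  · intro hPhi J K L hJ hK hL hJKL hNφ
    by_contra hcon
    push_neg at hcon
    obtain ⟨hJK, hLn⟩ := hcon
    -- get witnesses
    have hxy : ∃ x ∈ J, ∃ y ∈ K, x * y ∉ I := by
      by_contra h
      push_neg at h
      exact hJK (Ideal.mul_le.mpr h)
    obtain ⟨x, hxJ, y, hyK, hxy⟩ := hxy
    obtain ⟨z₀, hz₀L, hz₀⟩ := SetLike.not_le_iff_exists.mp hLn
    have nonJ : ∀ a ∈ J, ¬ IsUnit a := fun a ha hu => hJ (J.eq_top_of_isUnit_mem ha hu)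
    have nonK : ∀ a ∈ K, ¬ IsUnit a := fun a ha hu => hK (K.eq_top_of_isUnit_mem ha hu)
    have nonL : ∀ a ∈ L, ¬ IsUnit a := fun a ha hu => hL (L.eq_top_of_isUnit_mem ha hu)
    have star : ∀ u ∈ J, ∀ v ∈ K, ∀ c ∈ L, u * v ∉ I → c ∉ I → u * v * c ∈ φI := by
      intro u hu v hv c hc huv hcI
      by_contra hn
      have hmem : u * v * c ∈ I :=
        hJKL (Ideal.mul_mem_mul (Ideal.mul_mem_mul hu hv) hc)
      rcases hPhi u v c (nonJ u hu) (nonK v hv) (nonL c hc) hmem hn with h | h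
      · exact huv h
      · exact hcI h
    have claimA : ∀ u ∈ J, ∀ v ∈ K, u * v ∉ I → ∀ c ∈ L, u * v * c ∈ φI := by
      intro u hu v hv huv c hc
      by_cases hcI : c ∈ I
      · have hcz : c + z₀ ∉ I := by
          intro h
          exact hz₀ (by simpa using I.sub_mem h hcI)
        have h1 : u * v * (c + z₀) ∈ φI := star u hu v hv (c + z₀) (L.add_mem hc hz₀L) huv hcz
        have h2 : u * v * z₀ ∈ φI := star u hu v hv z₀ hz₀L huv hz₀
        have : u * v * c = u * v * (c + z₀) - u * v * z₀ := by ring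
        rw [this]; exact φI.sub_mem h1 h2
      · exact star u hu v hv c hc huv hcI
    have lemC : ∀ u ∈ J, ∀ v ∈ K, ∀ c ∈ L, u * v * c ∈ φI := by
      intro u hu v hv c hc
      by_cases huv : u * v ∈ I
      · by_cases hxv : x * v ∈ I
        · by_cases huy : u * y ∈ I
          · -- all in I; use x*y ∉ I
            have hxyc : x * y * c ∈ φI := claimA x hxJ y hyK hxy c hc
            have hxvy : x * (v + y) ∉ I := by
              intro h
              have h2 := I.sub_mem h hxv
              rw [show x * (v + y) - x * v = x * y by ring] at h2
              exact hxy h2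
            have hxvc : x * v * c ∈ φI := by
              have h1 : x * (v + y) * c ∈ φI :=
                claimA x hxJ (v + y) (K.add_mem hv hyK) hxvy c hc
              have : x * v * c = x * (v + y) * c - x * y * c := by ring
              rw [this]; exact φI.sub_mem h1 hxyc
            have huxy : (u + x) * y ∉ I := by
              intro h
              have h2 := I.sub_mem h huy
              rw [show (u + x) * y - u * y = x * y by ring] at h2
              exact hxy h2
            have huyc : u * y * c ∈ φI := by
              have h1 : (u + x) * y * c ∈ φI :=
                claimA (u + x) (J.add_mem hu hxJ) y hyK huxy c hc
              have : u * y * c = (u + x) * y * c - x * y * c := by ring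
              rw [this]; exact φI.sub_mem h1 hxyc
            have hbig : (u + x) * (v + y) ∉ I := by
              intro h
              apply hxy
              have : x * y = (u + x) * (v + y) - u * v - u * y - x * v := by ring
              rw [this]
              exact I.sub_mem (I.sub_mem (I.sub_mem h huv) huy) hxv
            have h1 : (u + x) * (v + y) * c ∈ φI :=
              claimA (u + x) (J.add_mem hu hxJ) (v + y) (K.add_mem hv hyK) hbig c hc
            have : u * v * c = (u + x) * (v + y) * c - u * y * c - x * v * c - x * y * c := by
              ring
            rw [this]
            exact φI.sub_mem (φI.sub_mem (φI.sub_mem h1 huyc) hxvc) hxyc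
          · -- u * y ∉ I
            have huyc : u * y * c ∈ φI := claimA u hu y hyK huy c hc
            have huvy : u * (v + y) ∉ I := by
              intro h
              have h2 := I.sub_mem h huv
              rw [show u * (v + y) - u * v = u * y by ring] at h2
              exact huy h2
            have h1 : u * (v + y) * c ∈ φI :=
              claimA u hu (v + y) (K.add_mem hv hyK) huvy c hc
            have : u * v * c = u * (v + y) * c - u * y * c := by ring
            rw [this]; exact φI.sub_mem h1 huyc
        · -- x * v ∉ I
          have hxvc : x * v * c ∈ φI := claimA x hxJ v hv hxv c hc
          have huxv : (u + x) * v ∉ I := by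
            intro h
            have h2 := I.sub_mem h huv
            rw [show (u + x) * v - u * v = x * v by ring] at h2
            exact hxv h2
          have h1 : (u + x) * v * c ∈ φI :=
            claimA (u + x) (J.add_mem hu hxJ) v hv huxv c hc
          have : u * v * c = (u + x) * v * c - x * v * c := by ring
          rw [this]; exact φI.sub_mem h1 hxvc
      · exact claimA u hu v hv huv c hc
    apply hNφ
    rw [Ideal.mul_le]
    intro p hp c hc
    revert c
    refine Submodule.mul_induction_on hp (fun u hu v hv c hc => lemC u hu v hv c hc)
      (fun a b ha hb c hc => ?_)
    have : (a + b) * c = a * c + b * c := by ring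
    rw [this]
    exact φI.add_mem (ha c hc) (hb c hc)
  · intro h x y z hx hy hz hmem hnS
    have hJ : Ideal.span {x} ≠ ⊤ := by
      rw [Ne, Ideal.span_singleton_eq_top]; exact hx
    have hK : Ideal.span {y} ≠ ⊤ := by
      rw [Ne, Ideal.span_singleton_eq_top]; exact hy
    have hL : Ideal.span {z} ≠ ⊤ := by
      rw [Ne, Ideal.span_singleton_eq_top]; exact hz
    have hprod : Ideal.span {x} * Ideal.span {y} * Ideal.span {z} =
        Ideal.span {x * y * z} := by
      rw [Ideal.span_singleton_mul_span_singleton, Ideal.span_singleton_mul_span_singleton]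
    have h1 : Ideal.span {x} * Ideal.span {y} * Ideal.span {z} ≤ I := by
      rw [hprod, Ideal.span_singleton_le_iff_mem]; exact hmem
    have h2 : ¬ (Ideal.span {x} * Ideal.span {y} * Ideal.span {z} ≤ φI) := by
      rw [hprod, Ideal.span_singleton_le_iff_mem]; exact hnS
    rcases h _ _ _ hJ hK hL h1 h2 with hc | hc
    · left
      have : x * y ∈ Ideal.span {x} * Ideal.span {y} := by
        rw [Ideal.span_singleton_mul_span_singleton]
        exact Ideal.mem_span_singleton_self _
      exact hc this
    · right
      exact hc (Ideal.mem_span_singleton_self z)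
end

section
/- Let I be a φ-1-absorbing prime ideal of a commutative ring R and suppose (x, y, z) is a φ-1-triple zero of I (i.e., x, y, z are nonunits with xyz ∈ φ(I), xy ∉ I, z ∉ I). Then xyI ⊆ φ(I). -/
theorem stmt_11 {R : Type*} [CommRing R] (I : Ideal R) (hI : I ≠ ⊤)
    (φI : Ideal R) (hφ : φI ≤ I) (h : Phi1AbsPrime I (φI : Set R))
    (x y z : R) (hx : ¬ IsUnit x) (hy : ¬ IsUnit y) (hz : ¬ IsUnit z)
    (h1 : x * y * z ∈ φI) (h2 : x * y ∉ I) (h3 : z ∉ I) :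
    ∀ a ∈ I, x * y * a ∈ φI := by
  intro a ha
  have hmemI : x * y * (z + a) ∈ I := by
    have : x * y * (z + a) = x * y * z + x * y * a := by ring
    rw [this]
    exact I.add_mem (hφ h1) (I.mul_mem_left _ ha)
  -- z + a is a nonunit
  have hza : ¬ IsUnit (z + a) := by
    intro hu
    obtain ⟨u, hu⟩ := hu
    apply h2
    have : x * y = x * y * (z + a) * (↑u⁻¹ : R) := by
      rw [← hu, mul_assoc]
      simp
    rw [this]
    exact I.mul_mem_right _ hmemI
  by_cases hp : x * y * (z + a) ∈ φI
  · have : x * y * a = x * y * (z + a) - x * y * z := by ring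
    rw [this]
    exact φI.sub_mem hp h1
  · rcases h x y (z + a) hx hy hza hmemI hp with h' | h'
    · exact absurd h' h2
    · exact absurd (by simpa using I.sub_mem h' ha) h3
end

section
/- Let I be a φ-1-absorbing prime ideal of a commutative ring R with a φ-1-triple zero (x, y, z) such that additionally xz ∉ I and yz ∉ I. Then xzI ⊆ φ(I), yzI ⊆ φ(I), xI² ⊆ φ(I), yI² ⊆ φ(I), zI² ⊆ φ(I), and I³ ⊆ φ(I). -/
theorem stmt_12 {R : Type*} [CommRing R] (I : Ideal R) (hI : I ≠ ⊤)
    (φI : Ideal R) (hφ : φI ≤ I) (h : Phi1AbsPrime I (φI : Set R))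
    (x y z : R) (hx : ¬ IsUnit x) (hy : ¬ IsUnit y) (hz : ¬ IsUnit z)
    (h1 : x * y * z ∈ φI) (h2 : x * y ∉ I) (h3 : z ∉ I)
    (hxz : x * z ∉ I) (hyz : y * z ∉ I) :
    (∀ a ∈ I, x * z * a ∈ φI) ∧ (∀ a ∈ I, y * z * a ∈ φI) ∧
    (∀ a ∈ I, ∀ b ∈ I, x * a * b ∈ φI) ∧
    (∀ a ∈ I, ∀ b ∈ I, y * a * b ∈ φI) ∧
    (∀ a ∈ I, ∀ b ∈ I, z * a * b ∈ φI) ∧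
    I ^ 3 ≤ φI := by
  have cancel : ∀ {u r : R}, IsUnit u → r * u ∈ I → r ∈ I := by
    rintro u r ⟨v, rfl⟩ hru
    have := I.mul_mem_right (↑v⁻¹) hru
    simpa [mul_assoc] using this
  -- x*y*I ⊆ φI
  have hxyI : ∀ a ∈ I, x * y * a ∈ φI := by
    intro a ha
    by_contra hc
    have hmem : x * y * (z + a) ∈ I := by
      have e : x * y * (z + a) = x * y * z + x * y * a := by ring
      rw [e]; exact I.add_mem (hφ h1) (I.mul_mem_left (x * y) ha)
    have hnot : x * y * (z + a) ∉ (φI : Set R) := by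
      intro hmemφ
      apply hc
      have e : x * y * a = x * y * (z + a) - x * y * z := by ring
      rw [e]; exact φI.sub_mem hmemφ h1
    have hnu : ¬ IsUnit (z + a) := fun hu => h2 (cancel hu hmem)
    rcases h x y (z + a) hx hy hnu hmem hnot with h' | h'
    · exact h2 h'
    · apply h3
      have e : z = (z + a) - a := by ring
      rw [e]; exact I.sub_mem h' ha
  -- x*z*I ⊆ φI
  have hxzI : ∀ a ∈ I, x * z * a ∈ φI := by
    intro a ha
    by_contra hc
    have hmem : x * (y + a) * z ∈ I := by
      have e : x * (y + a) * z = x * y * z + x * z * a := by ring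
      rw [e]; exact I.add_mem (hφ h1) (I.mul_mem_left (x * z) ha)
    have hnot : x * (y + a) * z ∉ (φI : Set R) := by
      intro hmemφ
      apply hc
      have e : x * z * a = x * (y + a) * z - x * y * z := by ring
      rw [e]; exact φI.sub_mem hmemφ h1
    have hnu : ¬ IsUnit (y + a) := by
      intro hu
      apply hxz
      refine cancel hu ?_
      have e : x * z * (y + a) = x * y * z + x * z * a := by ring
      rw [e]; exact I.add_mem (hφ h1) (I.mul_mem_left (x * z) ha)
    rcases h x (y + a) z hx hnu hz hmem hnot with h' | h'
    · apply h2
      have e : x * y = x * (y + a) - x * a := by ring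
      rw [e]; exact I.sub_mem h' (I.mul_mem_left x ha)
    · exact h3 h'
  -- y*z*I ⊆ φI
  have hyzI : ∀ a ∈ I, y * z * a ∈ φI := by
    intro a ha
    by_contra hc
    have hmem : y * (x + a) * z ∈ I := by
      have e : y * (x + a) * z = x * y * z + y * z * a := by ring
      rw [e]; exact I.add_mem (hφ h1) (I.mul_mem_left (y * z) ha)
    have hnot : y * (x + a) * z ∉ (φI : Set R) := by
      intro hmemφ
      apply hc
      have e : y * z * a = y * (x + a) * z - x * y * z := by ring
      rw [e]; exact φI.sub_mem hmemφ h1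
    have hnu : ¬ IsUnit (x + a) := by
      intro hu
      apply hyz
      refine cancel hu ?_
      have e : y * z * (x + a) = x * y * z + y * z * a := by ring
      rw [e]; exact I.add_mem (hφ h1) (I.mul_mem_left (y * z) ha)
    rcases h y (x + a) z hy hnu hz hmem hnot with h' | h'
    · apply h2
      have e : x * y = y * (x + a) - y * a := by ring
      rw [e]; exact I.sub_mem h' (I.mul_mem_left y ha)
    · exact h3 h'
  -- x*I*I ⊆ φI
  have hxII : ∀ a ∈ I, ∀ b ∈ I, x * a * b ∈ φI := by
    intro a ha b hb
    by_contra hc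
    have hmem : x * (y + a) * (z + b) ∈ I := by
      have e : x * (y + a) * (z + b)
          = x * y * z + x * y * b + x * z * a + x * a * b := by ring
      rw [e]
      exact I.add_mem (I.add_mem (I.add_mem (hφ h1) (hφ (hxyI b hb)))
        (hφ (hxzI a ha))) (I.mul_mem_left (x * a) hb)
    have hnot : x * (y + a) * (z + b) ∉ (φI : Set R) := by
      intro hmemφ
      apply hc
      have e : x * a * b
          = x * (y + a) * (z + b) - x * y * z - x * y * b - x * z * a := by ring
      rw [e]
      exact φI.sub_mem (φI.sub_mem (φI.sub_mem hmemφ h1) (hxyI b hb)) (hxzI a ha)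
    have hnu1 : ¬ IsUnit (y + a) := by
      intro hu
      apply hxz
      refine cancel hu ?_
      have e : x * z * (y + a) = x * y * z + x * z * a := by ring
      rw [e]; exact I.add_mem (hφ h1) (hφ (hxzI a ha))
    have hnu2 : ¬ IsUnit (z + b) := by
      intro hu
      apply h2
      refine cancel hu ?_
      have e : x * y * (z + b) = x * y * z + x * y * b := by ring
      rw [e]; exact I.add_mem (hφ h1) (hφ (hxyI b hb))
    rcases h x (y + a) (z + b) hx hnu1 hnu2 hmem hnot with h' | h'
    · apply h2
      have e : x * y = x * (y + a) - x * a := by ring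
      rw [e]; exact I.sub_mem h' (I.mul_mem_left x ha)
    · apply h3
      have e : z = (z + b) - b := by ring
      rw [e]; exact I.sub_mem h' hb
  -- y*I*I ⊆ φI
  have hyII : ∀ a ∈ I, ∀ b ∈ I, y * a * b ∈ φI := by
    intro a ha b hb
    by_contra hc
    have hmem : y * (x + a) * (z + b) ∈ I := by
      have e : y * (x + a) * (z + b)
          = x * y * z + x * y * b + y * z * a + y * a * b := by ring
      rw [e]
      exact I.add_mem (I.add_mem (I.add_mem (hφ h1) (hφ (hxyI b hb)))
        (hφ (hyzI a ha))) (I.mul_mem_left (y * a) hb)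
    have hnot : y * (x + a) * (z + b) ∉ (φI : Set R) := by
      intro hmemφ
      apply hc
      have e : y * a * b
          = y * (x + a) * (z + b) - x * y * z - x * y * b - y * z * a := by ring
      rw [e]
      exact φI.sub_mem (φI.sub_mem (φI.sub_mem hmemφ h1) (hxyI b hb)) (hyzI a ha)
    have hnu1 : ¬ IsUnit (x + a) := by
      intro hu
      apply hyz
      refine cancel hu ?_
      have e : y * z * (x + a) = x * y * z + y * z * a := by ring
      rw [e]; exact I.add_mem (hφ h1) (hφ (hyzI a ha))
    have hnu2 : ¬ IsUnit (z + b) := by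
      intro hu
      apply h2
      refine cancel hu ?_
      have e : x * y * (z + b) = x * y * z + x * y * b := by ring
      rw [e]; exact I.add_mem (hφ h1) (hφ (hxyI b hb))
    rcases h y (x + a) (z + b) hy hnu1 hnu2 hmem hnot with h' | h'
    · apply h2
      have e : x * y = y * (x + a) - y * a := by ring
      rw [e]; exact I.sub_mem h' (I.mul_mem_left y ha)
    · apply h3
      have e : z = (z + b) - b := by ring
      rw [e]; exact I.sub_mem h' hb
  -- z*I*I ⊆ φI
  have hzII : ∀ a ∈ I, ∀ b ∈ I, z * a * b ∈ φI := by
    intro a ha b hb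
    by_contra hc
    have hmem : (x + a) * (y + b) * z ∈ I := by
      have e : (x + a) * (y + b) * z
          = x * y * z + x * z * b + y * z * a + z * a * b := by ring
      rw [e]
      exact I.add_mem (I.add_mem (I.add_mem (hφ h1) (hφ (hxzI b hb)))
        (hφ (hyzI a ha))) (I.mul_mem_left (z * a) hb)
    have hnot : (x + a) * (y + b) * z ∉ (φI : Set R) := by
      intro hmemφ
      apply hc
      have e : z * a * b
          = (x + a) * (y + b) * z - x * y * z - x * z * b - y * z * a := by ring
      rw [e]
      exact φI.sub_mem (φI.sub_mem (φI.sub_mem hmemφ h1) (hxzI b hb)) (hyzI a ha)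
    have hnu1 : ¬ IsUnit (x + a) := by
      intro hu
      apply hyz
      refine cancel hu ?_
      have e : y * z * (x + a) = x * y * z + y * z * a := by ring
      rw [e]; exact I.add_mem (hφ h1) (hφ (hyzI a ha))
    have hnu2 : ¬ IsUnit (y + b) := by
      intro hu
      apply hxz
      refine cancel hu ?_
      have e : x * z * (y + b) = x * y * z + x * z * b := by ring
      rw [e]; exact I.add_mem (hφ h1) (hφ (hxzI b hb))
    rcases h (x + a) (y + b) z hnu1 hnu2 hz hmem hnot with h' | h'
    · apply h2
      have e : x * y = (x + a) * (y + b) - x * b - a * y - a * b := by ring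
      rw [e]
      exact I.sub_mem (I.sub_mem (I.sub_mem h' (I.mul_mem_left x hb))
        (I.mul_mem_right y ha)) (I.mul_mem_left a hb)
    · exact h3 h'
  -- I*I*I ⊆ φI elementwise
  have habc : ∀ a ∈ I, ∀ b ∈ I, ∀ c ∈ I, a * b * c ∈ φI := by
    intro a ha b hb c hc
    by_contra hco
    have hmem : (x + a) * (y + b) * (z + c) ∈ I := by
      have e : (x + a) * (y + b) * (z + c)
          = x * y * z + x * y * c + x * z * b + x * b * c
            + y * z * a + y * a * c + z * a * b + a * b * c := by ring
      rw [e]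
      refine I.add_mem (I.add_mem (I.add_mem (I.add_mem (I.add_mem (I.add_mem
        (I.add_mem (hφ h1) (hφ (hxyI c hc))) (hφ (hxzI b hb)))
        (hφ (hxII b hb c hc))) (hφ (hyzI a ha))) (hφ (hyII a ha c hc)))
        (hφ (hzII a ha b hb))) (I.mul_mem_left (a * b) hc)
    have hnot : (x + a) * (y + b) * (z + c) ∉ (φI : Set R) := by
      intro hmemφ
      apply hco
      have e : a * b * c
          = (x + a) * (y + b) * (z + c) - x * y * z - x * y * c - x * z * b
            - x * b * c - y * z * a - y * a * c - z * a * b := by ring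
      rw [e]
      exact φI.sub_mem (φI.sub_mem (φI.sub_mem (φI.sub_mem (φI.sub_mem
        (φI.sub_mem (φI.sub_mem hmemφ h1) (hxyI c hc)) (hxzI b hb))
        (hxII b hb c hc)) (hyzI a ha)) (hyII a ha c hc)) (hzII a ha b hb)
    have hnu1 : ¬ IsUnit (x + a) := by
      intro hu
      apply hyz
      refine cancel hu ?_
      have e : y * z * (x + a) = x * y * z + y * z * a := by ring
      rw [e]; exact I.add_mem (hφ h1) (hφ (hyzI a ha))
    have hnu2 : ¬ IsUnit (y + b) := by
      intro hu
      apply hxz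
      refine cancel hu ?_
      have e : x * z * (y + b) = x * y * z + x * z * b := by ring
      rw [e]; exact I.add_mem (hφ h1) (hφ (hxzI b hb))
    have hnu3 : ¬ IsUnit (z + c) := by
      intro hu
      apply h2
      refine cancel hu ?_
      have e : x * y * (z + c) = x * y * z + x * y * c := by ring
      rw [e]; exact I.add_mem (hφ h1) (hφ (hxyI c hc))
    rcases h (x + a) (y + b) (z + c) hnu1 hnu2 hnu3 hmem hnot with h' | h'
    · apply h2
      have e : x * y = (x + a) * (y + b) - x * b - a * y - a * b := by ring
      rw [e]
      exact I.sub_mem (I.sub_mem (I.sub_mem h' (I.mul_mem_left x hb))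
        (I.mul_mem_right y ha)) (I.mul_mem_left a hb)
    · apply h3
      have e : z = (z + c) - c := by ring
      rw [e]; exact I.sub_mem h' hc
  refine ⟨hxzI, hyzI, hxII, hyII, hzII, ?_⟩
  have hpow : I ^ 3 = I * I * I := by rw [pow_succ, pow_two]
  rw [hpow]
  refine Submodule.mul_le.mpr fun m hm c hc => ?_
  refine Submodule.mul_induction_on hm (fun a ha b hb => habc a ha b hb c hc)
    (fun m1 m2 hm1 hm2 => ?_)
  rw [add_mul]; exact φI.add_mem hm1 hm2
end

section
/- Let R be a commutative ring and a a nonunit element with (0 : a) ⊆ (a). Then the principal ideal (a) is an almost 1-absorbing prime ideal (φ₂-1-absorbing prime, φ₂(I) = I²) if and only if (a) is a 1-absorbing prime ideal. -/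
theorem stmt_13 {R : Type*} [CommRing R] (a : R) (ha : ¬ IsUnit a)
    (hproper : Ideal.span {a} ≠ ⊤)
    (hann : ∀ r : R, r * a = 0 → r ∈ Ideal.span {a}) :
    Phi1AbsPrime (Ideal.span {a}) ((Ideal.span {a} ^ 2 : Ideal R) : Set R) ↔
      Phi1AbsPrime (Ideal.span {a}) (∅ : Set R) := by
  constructor
  · intro H x y z hx hy hz hmem _
    by_cases hsq : x * y * z ∈ (Ideal.span {a} ^ 2 : Ideal R)
    · -- xyz ∈ (a)²
      have hsq' : Ideal.span {a} ^ 2 = Ideal.span {a * a} := by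
        rw [sq, Ideal.span_singleton_mul_span_singleton]
      by_cases hw : x * y * (z + a) ∈ (Ideal.span {a} ^ 2 : Ideal R)
      · -- then x*y*a ∈ (a²), so xy ∈ (a) via annihilator condition
        have hxya : x * y * a ∈ (Ideal.span {a} ^ 2 : Ideal R) := by
          have : x * y * (z + a) - x * y * z = x * y * a := by ring
          rw [← this]
          exact Ideal.sub_mem _ hw hsq
        rw [hsq', Ideal.mem_span_singleton] at hxya
        obtain ⟨r, hr⟩ := hxya
        have h0 : (x * y - r * a) * a = 0 := by
          have : x * y * a = r * a * a := by rw [hr]; ring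
          linear_combination this
        have := hann _ h0
        left
        have hra : r * a ∈ Ideal.span {a} :=
          Ideal.mul_mem_left _ _ (Ideal.mem_span_singleton_self a)
        have := Ideal.add_mem _ this hra
        simpa using this
      · -- x*y*(z+a) ∈ (a) \ (a)²
        have hmem' : x * y * (z + a) ∈ Ideal.span {a} := by
          have h1 : x * y * a ∈ Ideal.span {a} :=
            Ideal.mul_mem_left _ _ (Ideal.mem_span_singleton_self a)
          have : x * y * (z + a) = x * y * z + x * y * a := by ring
          rw [this]; exact Ideal.add_mem _ hmem h1
        by_cases hu : IsUnit (z + a)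
        · left
          obtain ⟨u, hu⟩ := hu
          have : x * y = x * y * (z + a) * ↑u⁻¹ := by
            rw [← hu]; simp [mul_assoc]
          rw [this]
          exact Ideal.mul_mem_right _ _ hmem'
        · rcases H x y (z + a) hx hy hu hmem' hw with h | h
          · exact Or.inl h
          · right
            have h2 : (z + a) - a ∈ Ideal.span {a} :=
              Ideal.sub_mem _ h (Ideal.mem_span_singleton_self a)
            simpa using h2
    · exact H x y z hx hy hz hmem hsq
  · intro H x y z hx hy hz hmem _
    exact H x y z hx hy hz hmem (Set.notMem_empty _)
end

section
/- Let R be a commutative ring that is not quasi-local (has at least two maximal ideals), I a proper ideal, and suppose (φ(I) : x) is not a maximal ideal for each x ∈ I. Then I is φ-prime if and only if I is φ-1-absorbing prime. -/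
theorem stmt_14 {R : Type*} [CommRing R]
    (hnl : ∃ m₁ m₂ : Ideal R, m₁.IsMaximal ∧ m₂.IsMaximal ∧ m₁ ≠ m₂)
    (I : Ideal R) (hI : I ≠ ⊤) (φI : Ideal R) (hφ : φI ≤ I)
    (hcol : ∀ x ∈ I, ¬ (φI.colon (Ideal.span {x})).IsMaximal) :
    (∀ x y : R, x * y ∈ I → x * y ∉ φI → x ∈ I ∨ y ∈ I) ↔
      Phi1AbsPrime I (φI : Set R) := by
  constructor
  · intro hp x y z _ _ _ hmem hnφ
    exact hp (x * y) z hmem hnφ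
  · intro h1 a b hab hnφ
    by_cases ha : IsUnit a
    · right
      obtain ⟨u, rfl⟩ := ha
      have h : (↑u⁻¹ : R) * (↑u * b) ∈ I := I.mul_mem_left _ hab
      simpa [← mul_assoc] using h
    by_cases hb : IsUnit b
    · left
      obtain ⟨u, rfl⟩ := hb
      have h : (a * ↑u) * (↑u⁻¹ : R) ∈ I := I.mul_mem_right _ hab
      simpa [mul_assoc] using h
    by_contra hcon
    push_neg at hcon
    obtain ⟨haI, hbI⟩ := hcon
    set J := φI.colon (Ideal.span {a * b}) with hJ
    have hJprop : J ≠ ⊤ := by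
      intro h
      have h1' : (1 : R) ∈ J := h ▸ Submodule.mem_top
      rw [hJ, Ideal.mem_colon_span_singleton, one_mul] at h1'
      exact hnφ h1'
    have hJnm : ¬ J.IsMaximal := hcol _ hab
    obtain ⟨m₁, hm₁, hJm₁⟩ := Ideal.exists_le_maximal J hJprop
    have key : ∀ e : R, ¬ IsUnit e → e ∉ J → a * e ∈ I := by
      intro e he heJ
      have hmem : a * e * b ∈ I := by
        have h' : a * b * e ∈ I := I.mul_mem_right e hab
        rwa [show a * e * b = a * b * e by ring]
      have hnot : a * e * b ∉ φI := by
        intro h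
        apply heJ
        rw [hJ, Ideal.mem_colon_span_singleton]
        rwa [show e * (a * b) = a * e * b by ring]
      rcases h1 a e b ha he hb hmem hnot with h | h
      · exact h
      · exact absurd h hbI
    have nonunit_of_mem : ∀ e ∈ m₁, ¬ IsUnit e := fun e hem hu =>
      hm₁.ne_top (Ideal.eq_top_of_isUnit_mem _ hem hu)
    have key2 : ∀ e ∈ m₁, a * e ∈ I := by
      intro e hem
      by_cases heJ : e ∈ J
      · obtain ⟨t, htm, htJ⟩ : ∃ t ∈ m₁, t ∉ J := by
          by_contra hc
          push_neg at hc
          exact hJnm ((le_antisymm hc hJm₁) ▸ hm₁)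
        have h1' : a * (e + t) ∈ I :=
          key _ (nonunit_of_mem _ (m₁.add_mem hem htm))
            (fun h => htJ (by simpa using J.sub_mem h heJ))
        have h2' : a * t ∈ I := key t (nonunit_of_mem _ htm) htJ
        have h3 := I.sub_mem h1' h2'
        have : a * (e + t) - a * t = a * e := by ring
        rwa [this] at h3
      · exact key e (nonunit_of_mem _ hem) heJ
    obtain ⟨n₁, n₂, hn₁, hn₂, hne⟩ := hnl
    obtain ⟨m₂, hm₂, hm₂ne⟩ : ∃ m₂ : Ideal R, m₂.IsMaximal ∧ m₂ ≠ m₁ := by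
      by_cases h : n₁ = m₁
      · exact ⟨n₂, hn₂, by rw [← h]; exact hne.symm⟩
      · exact ⟨n₁, hn₁, h⟩
    have hsum : m₂ ⊔ m₁ = ⊤ :=
      Ideal.IsMaximal.coprime_of_ne hm₂ hm₁ hm₂ne
    have h1mem : (1 : R) ∈ m₂ ⊔ m₁ := hsum ▸ Submodule.mem_top
    obtain ⟨d, hd, c, hc, hdc⟩ := Submodule.mem_sup.mp h1mem
    have hdm₁ : d ∉ m₁ := by
      intro h
      exact hm₁.ne_top (Ideal.eq_top_of_isUnit_mem _
        (by rw [← hdc]; exact m₁.add_mem h hc) isUnit_one)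
    have hdJ : d ∉ J := fun h => hdm₁ (hJm₁ h)
    have had : a * d ∈ I := key d (fun hu => hm₂.ne_top
      (Ideal.eq_top_of_isUnit_mem _ hd hu)) hdJ
    have hac : a * c ∈ I := key2 c hc
    have : a * d + a * c ∈ I := I.add_mem had hac
    rw [← mul_add, hdc, mul_one] at this
    exact haI this
end

section
/- If I is a φ-1-absorbing prime ideal of a commutative ring R, then I/φ(I) is a weakly 1-absorbing prime ideal of the quotient ring R/φ(I). -/
theorem stmt_15 {R : Type*} [CommRing R] (I : Ideal R) (hI : I ≠ ⊤)
    (φI : Ideal R) (hφ : φI ≤ I) (h : Phi1AbsPrime I (φI : Set R)) :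
    Ideal.map (Ideal.Quotient.mk φI) I ≠ ⊤ ∧
      ∀ a b c : R ⧸ φI, ¬ IsUnit a → ¬ IsUnit b → ¬ IsUnit c →
        a * b * c ≠ 0 → a * b * c ∈ Ideal.map (Ideal.Quotient.mk φI) I →
          a * b ∈ Ideal.map (Ideal.Quotient.mk φI) I ∨
            c ∈ Ideal.map (Ideal.Quotient.mk φI) I := by
  constructor
  · intro htop
    apply hI
    rw [Ideal.eq_top_iff_one]
    have : (Ideal.Quotient.mk φI) 1 ∈ Ideal.map (Ideal.Quotient.mk φI) I := by
      rw [htop]; trivial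
    exact (Ideal.mem_quotient_iff_mem hφ).mp this
  · intro a b c ha hb hc habc hmem
    obtain ⟨x, rfl⟩ := Ideal.Quotient.mk_surjective a
    obtain ⟨y, rfl⟩ := Ideal.Quotient.mk_surjective b
    obtain ⟨z, rfl⟩ := Ideal.Quotient.mk_surjective c
    have hx : ¬ IsUnit x := fun hu => ha (hu.map _)
    have hy : ¬ IsUnit y := fun hu => hb (hu.map _)
    have hz : ¬ IsUnit z := fun hu => hc (hu.map _)
    rw [← map_mul, ← map_mul] at hmem habc
    have hIn : x * y * z ∈ I := (Ideal.mem_quotient_iff_mem hφ).mp hmem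
    have hns : x * y * z ∉ (φI : Set R) := fun hs => habc (Ideal.Quotient.eq_zero_iff_mem.mpr hs)
    rcases h x y z hx hy hz hIn hns with h1 | h1
    · exact Or.inl (by rw [← map_mul]; exact Ideal.mem_map_of_mem _ h1)
    · exact Or.inr (Ideal.mem_map_of_mem _ h1)
end
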